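/- arXiv:1302.5669 — 2 statements merged into one kernel-verified Lean document; each statement's English description precedes it below -/
import Mathlib

section
/- Let q be a prime power, m ≥ 1, and let β = (b_1,…,b_m) be a basis of F_{q^m} over F_q with dual basis β^⊥ = (b_1^*,…,b_m^*) with respect to the trace form. Then for every F_{q^m}-linear code C ⊆ F_{q^m}^n, the Euclidean dual of the q-ary expansion of C with respect to β equals the q-ary expansion of the Euclidean dual code C^⊥ with respect to β^⊥, i.e. [β(C)]^⊥ = β^⊥(C^⊥). -/
open Finset

/-- Euclidean dual of a linear code. -/
def dualCode {F : Type*} [CommRing F] {ι : Type*} [Fintype ι]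
    (C : Submodule F (ι → F)) : Submodule F (ι → F) where
  carrier := {y | ∀ x ∈ C, ∑ i, y i * x i = 0}
  add_mem' := by
    intro a b ha hb x hx
    simp only [Set.mem_setOf_eq] at *
    simp only [Pi.add_apply, add_mul, Finset.sum_add_distrib, ha x hx, hb x hx, add_zero]
  zero_mem' := by intro x hx; simp
  smul_mem' := by
    intro c a ha x hx
    simp only [Set.mem_setOf_eq] at *
    simp only [Pi.smul_apply, smul_eq_mul, mul_assoc, ← Finset.mul_sum, ha x hx, mul_zero]

/-- The `q`-ary expansion map with respect to a basis. -/
noncomputable def expandMap {K L : Type*} [Field K] [Field L] [Algebra K L]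
    {m : ℕ} (b : Module.Basis (Fin m) K L) (ι : Type*) :
    (ι → L) →ₗ[K] (ι × Fin m → K) where
  toFun c := fun p => b.repr (c p.1) p.2
  map_add' x y := by funext p; simp
  map_smul' r x := by funext p; simp

/-- The `q`-ary expansion of a code with respect to a basis. -/
noncomputable def expandCode {K L : Type*} [Field K] [Field L] [Algebra K L]
    {m : ℕ} (b : Module.Basis (Fin m) K L) {ι : Type*} (C : Submodule L (ι → L)) :
    Submodule K (ι × Fin m → K) :=
  Submodule.map (expandMap b ι) (C.restrictScalars K)

/-- For a basis `b` of `F_{q^m}` over `F_q` with trace-dual basis `bd`,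
the Euclidean dual of the `q`-ary expansion of a linear code `C` with respect to `b`
equals the `q`-ary expansion of the Euclidean dual `C^⊥` with respect to `bd`. -/
theorem dual_of_expansion
    {K L : Type*} [Field K] [Field L] [Algebra K L] [Fintype K] [Fintype L]
    {m : ℕ} (b bd : Module.Basis (Fin m) K L)
    (hdual : ∀ i j, Algebra.trace K L (b i * bd j) = if i = j then 1 else 0)
    {n : ℕ} (C : Submodule L (Fin n → L)) :
    dualCode (expandCode b C) = expandCode bd (dualCode C) := by

  classical
  have hb : ∀ (x : L) (j : Fin m), Algebra.trace K L (x * bd j) = b.repr x j := by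
    intro x j
    conv_lhs => rw [← b.sum_repr x]
    rw [Finset.sum_mul, map_sum]
    simp only [smul_mul_assoc, map_smul, hdual, smul_eq_mul, mul_ite, mul_one, mul_zero]
    simp
  have pairing : ∀ (y : Fin n × Fin m → K) (c : Fin n → L),
      ∑ p, y p * (expandMap b (Fin n)) c p =
      Algebra.trace K L (∑ i, c i * ∑ j, y (i, j) • bd j) := by
    intro y c
    rw [map_sum, Fintype.sum_prod_type]
    refine Finset.sum_congr rfl fun i _ => ?_
    rw [Finset.mul_sum, map_sum]
    refine Finset.sum_congr rfl fun j _ => ?_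
    rw [mul_smul_comm, map_smul, hb, smul_eq_mul]
    simp [expandMap]
  ext y
  constructor
  · intro hy
    set z : Fin n → L := fun i => ∑ j, y (i, j) • bd j with hzdef
    have htr : ∀ c ∈ C, Algebra.trace K L (∑ i, c i * z i) = 0 := by
      intro c hc
      rw [← pairing y c]
      exact hy _ ⟨c, hc, rfl⟩
    have hzC : z ∈ dualCode C := by
      intro c hc
      have hall : ∀ j : Fin m, b.repr (∑ i, z i * c i) j = 0 := by
        intro j
        rw [← hb]
        have h2 := htr (bd j • c) (C.smul_mem _ hc)
        rw [← h2]
        congr 1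
        rw [Finset.sum_mul]
        refine Finset.sum_congr rfl fun i _ => ?_
        simp only [Pi.smul_apply, smul_eq_mul]
        ring
      have hz0 : b.repr (∑ i, z i * c i) = 0 := by
        ext j; simpa using hall j
      simpa using b.repr.map_eq_zero_iff.mp hz0
    refine ⟨z, hzC, ?_⟩
    funext p
    simp [expandMap, hzdef, Finsupp.single_apply, Finset.sum_ite_eq, Finset.sum_ite_eq']
  · rintro ⟨z, hz, rfl⟩ x hx
    rcases hx with ⟨c, hc, rfl⟩
    rw [pairing]
    have hrep : ∀ i, (∑ j, (expandMap bd (Fin n)) z (i, j) • bd j) = z i := by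
      intro i
      simpa [expandMap] using bd.sum_repr (z i)
    simp only [hrep]
    have h0 : ∑ i, c i * z i = 0 := by
      rw [show (∑ i, c i * z i) = ∑ i, z i * c i from
        Finset.sum_congr rfl fun i _ => mul_comm _ _]
      exact hz c hc
    rw [h0, map_zero]
end

section
/- (Classical content of the (u|u+v) theorem for asymmetric quantum codes.) Let C_2 ⊆ C_1 ⊆ F_q^n and C_4 ⊆ C_3 ⊆ F_q^n be linear codes of dimensions k_2 ≤ k_1 and k_4 ≤ k_3, with d_1 = d(C_1), d_3 = d(C_3), d_2^⊥ = d(C_2^⊥) and d_4^⊥ = d(C_4^⊥). Then: (i) (C_2|C_2+C_4) ⊆ (C_1|C_1+C_3); (ii) dim (C_1|C_1+C_3) − dim (C_2|C_2+C_4) = (k_1 + k_3) − (k_2 + k_4); (iii) every nonzero codeword of (C_1|C_1+C_3) has Hamming weight at least min{2d_1, d_3}; and (iv) every nonzero codeword of [(C_2|C_2+C_4)]^⊥ has Hamming weight at least min{2d_4^⊥, d_2^⊥}. -/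
open Finset

/-- Minimum distance (minimum weight of a nonzero codeword). -/
noncomputable def minDist {F : Type*} [Field F] [DecidableEq F] {ι : Type*} [Fintype ι]
    (C : Submodule F (ι → F)) : ℕ :=
  sInf {w | ∃ c ∈ C, c ≠ 0 ∧ hammingNorm c = w}

/-- The `(u|u+v)` construction applied to two codes of the same length. -/
def uuvCode {F : Type*} [Field F] {n : ℕ} (C D : Submodule F (Fin n → F)) :
    Submodule F (Fin n ⊕ Fin n → F) where
  carrier := {x | ∃ u ∈ C, ∃ v ∈ D, x = Sum.elim u (u + v)}
  zero_mem' := ⟨0, C.zero_mem, 0, D.zero_mem, by funext j; cases j <;> simp⟩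
  add_mem' := by
    rintro a b ⟨u₁, hu₁, v₁, hv₁, rfl⟩ ⟨u₂, hu₂, v₂, hv₂, rfl⟩
    refine ⟨u₁ + u₂, C.add_mem hu₁ hu₂, v₁ + v₂, D.add_mem hv₁ hv₂, ?_⟩
    funext j; cases j <;> simp <;> ring
  smul_mem' := by
    rintro c a ⟨u, hu, v, hv, rfl⟩
    refine ⟨c • u, C.smul_mem c hu, c • v, D.smul_mem c hv, ?_⟩
    funext j; cases j <;> simp [mul_add]

section Aux

variable {F : Type*} [Field F] [DecidableEq F] {n : ℕ}

lemma hammingNorm_sum_elim (a b : Fin n → F) :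
    hammingNorm (Sum.elim a b) = hammingNorm a + hammingNorm b := by
  simp [hammingNorm, Finset.card_filter, Fintype.sum_sum_type]
  rfl

lemma hammingNorm_add_le (a b : Fin n → F) :
    hammingNorm (a + b) ≤ hammingNorm a + hammingNorm b := by
  classical
  have hsub : ({i | (a + b) i ≠ 0} : Finset (Fin n)) ⊆
      ({i | a i ≠ 0} : Finset (Fin n)) ∪ ({i | b i ≠ 0} : Finset (Fin n)) := by
    intro i hi
    simp only [Finset.mem_filter, Finset.mem_union, Finset.mem_univ, true_and,
      Pi.add_apply] at *
    by_contra h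
    push_neg at h
    simp [h.1, h.2] at hi
  calc hammingNorm (a + b) ≤ _ := Finset.card_le_card hsub
    _ ≤ _ := Finset.card_union_le _ _

lemma hammingNorm_neg (a : Fin n → F) : hammingNorm (-a) = hammingNorm a := by
  simp [hammingNorm]

lemma minDist_le (C : Submodule F (Fin n → F)) {c : Fin n → F} (hc : c ∈ C) (hne : c ≠ 0) :
    minDist C ≤ hammingNorm c :=
  Nat.sInf_le ⟨c, hc, hne, rfl⟩

lemma finrank_uuvCode (C D : Submodule F (Fin n → F)) :
    Module.finrank F (uuvCode C D) = Module.finrank F C + Module.finrank F D := by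
  let φ : (C × D) →ₗ[F] (Fin n ⊕ Fin n → F) :=
    { toFun := fun p => Sum.elim (p.1 : Fin n → F) ((p.1 : Fin n → F) + (p.2 : Fin n → F))
      map_add' := by
        rintro ⟨u₁, v₁⟩ ⟨u₂, v₂⟩
        funext j; cases j <;> simp <;> ring
      map_smul' := by
        rintro c ⟨u, v⟩
        funext j; cases j <;> simp [mul_add] }
  have hinj : Function.Injective φ := by
    rintro ⟨u₁, v₁⟩ ⟨u₂, v₂⟩ h
    have h1 : (u₁ : Fin n → F) = u₂ := by
      funext i; exact congrFun h (Sum.inl i)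
    have h2 : (u₁ : Fin n → F) + v₁ = (u₂ : Fin n → F) + v₂ := by
      funext i; exact congrFun h (Sum.inr i)
    have h3 : (v₁ : Fin n → F) = v₂ := by
      have := h2; rw [h1] at this; exact add_left_cancel this
    ext : 2 <;> simp [h1, h3]
  have hrange : LinearMap.range φ = uuvCode C D := by
    ext x
    constructor
    · rintro ⟨⟨u, v⟩, rfl⟩
      exact ⟨u, u.2, v, v.2, rfl⟩
    · rintro ⟨u, hu, v, hv, rfl⟩
      exact ⟨(⟨u, hu⟩, ⟨v, hv⟩), rfl⟩
  rw [← hrange, LinearMap.finrank_range_of_inj hinj, Module.finrank_prod]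

lemma mem_dual_uuv {C D : Submodule F (Fin n → F)} {y : Fin n ⊕ Fin n → F}
    (hy : y ∈ dualCode (uuvCode C D)) :
    (fun i => y (Sum.inl i) + y (Sum.inr i)) ∈ dualCode C ∧
      (fun i => y (Sum.inr i)) ∈ dualCode D := by
  have key : ∀ u ∈ C, ∀ v ∈ D,
      (∑ i, y (Sum.inl i) * u i) + ∑ i, y (Sum.inr i) * (u i + v i) = 0 := by
    intro u hu v hv
    have := hy (Sum.elim u (u + v)) ⟨u, hu, v, hv, rfl⟩
    rwa [Fintype.sum_sum_type] at this
  constructor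
  · intro u hu
    have := key u hu 0 D.zero_mem
    simp only [Pi.zero_apply, add_zero] at this
    rw [← this, ← Finset.sum_add_distrib]
    exact Finset.sum_congr rfl fun i _ => by ring
  · intro v hv
    have := key 0 C.zero_mem v hv
    simpa using this

end Aux

/-- classical data of the `(u|u+v)` theorem: for nested codes
`C₂ ⊆ C₁` and `C₄ ⊆ C₃` in `F_q^n`: (i) `(C₂|C₂+C₄) ⊆ (C₁|C₁+C₃)`; (ii) the
dimension difference is `(k₁+k₃) - (k₂+k₄)`; (iii) nonzero codewords of
`(C₁|C₁+C₃)` have weight `≥ min (2 d₁) d₃`; (iv) nonzero codewords of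
`(C₂|C₂+C₄)^⊥` have weight `≥ min (2 d₄') d₂'`. -/
theorem uuv_CSS_data {F : Type*} [Field F] [DecidableEq F] {n : ℕ}
    (C₁ C₂ C₃ C₄ : Submodule F (Fin n → F)) (h12 : C₂ ≤ C₁) (h34 : C₄ ≤ C₃)
    (k₁ k₂ k₃ k₄ d₁ d₃ d₂' d₄' : ℕ) (hkk : k₂ ≤ k₁) (hkk' : k₄ ≤ k₃)
    (hk₁ : Module.finrank F C₁ = k₁) (hk₂ : Module.finrank F C₂ = k₂)
    (hk₃ : Module.finrank F C₃ = k₃) (hk₄ : Module.finrank F C₄ = k₄)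
    (hd₁ : minDist C₁ = d₁) (hd₃ : minDist C₃ = d₃)
    (hd₂ : minDist (dualCode C₂) = d₂') (hd₄ : minDist (dualCode C₄) = d₄') :
    uuvCode C₂ C₄ ≤ uuvCode C₁ C₃ ∧
    Module.finrank F (uuvCode C₁ C₃) - Module.finrank F (uuvCode C₂ C₄)
      = (k₁ + k₃) - (k₂ + k₄) ∧
    (∀ x ∈ uuvCode C₁ C₃, x ≠ 0 → min (2 * d₁) d₃ ≤ hammingNorm x) ∧
    (∀ y ∈ dualCode (uuvCode C₂ C₄), y ≠ 0 → min (2 * d₄') d₂' ≤ hammingNorm y) := by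
  refine ⟨?_, ?_, ?_, ?_⟩
  · rintro x ⟨u, hu, v, hv, rfl⟩
    exact ⟨u, h12 hu, v, h34 hv, rfl⟩
  · rw [finrank_uuvCode, finrank_uuvCode, hk₁, hk₂, hk₃, hk₄]
  · rintro x ⟨u, hu, v, hv, rfl⟩ hne
    rw [hammingNorm_sum_elim]
    by_cases hv0 : v = 0
    · subst hv0
      have hu0 : u ≠ 0 := by
        rintro rfl
        exact hne (by funext j; cases j <;> simp)
      have h1 : d₁ ≤ hammingNorm u := hd₁ ▸ minDist_le C₁ hu hu0
      calc min (2 * d₁) d₃ ≤ 2 * d₁ := min_le_left _ _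
        _ ≤ hammingNorm u + hammingNorm (u + 0) := by
            simp only [add_zero]; omega
    · have h3 : d₃ ≤ hammingNorm v := hd₃ ▸ minDist_le C₃ hv hv0
      have htri : hammingNorm v ≤ hammingNorm (u + v) + hammingNorm u := by
        have := hammingNorm_add_le (u + v) (-u)
        simpa [hammingNorm_neg] using this
      calc min (2 * d₁) d₃ ≤ d₃ := min_le_right _ _
        _ ≤ hammingNorm v := h3
        _ ≤ hammingNorm u + hammingNorm (u + v) := by omega
  · intro y hy hne
    obtain ⟨hab, hb⟩ := mem_dual_uuv hy
    set a : Fin n → F := fun i => y (Sum.inl i) with ha_def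
    set b : Fin n → F := fun i => y (Sum.inr i) with hb_def
    have hy_eq : y = Sum.elim a b := by funext j; cases j <;> rfl
    have hnorm : hammingNorm y = hammingNorm a + hammingNorm b := by
      rw [hy_eq, hammingNorm_sum_elim]
    rw [hnorm]
    by_cases hb0 : b = 0
    · have ha0 : a ≠ 0 := fun ha0' =>
        hne (by rw [hy_eq, hb0, ha0']; funext j; cases j <;> simp)
      have hamem : a ∈ dualCode C₂ := by
        have : (fun i => a i + b i) = a := by funext i; rw [hb0]; simp
        rwa [this] at hab
      have h2 : d₂' ≤ hammingNorm a := hd₂ ▸ minDist_le (dualCode C₂) hamem ha0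
      calc min (2 * d₄') d₂' ≤ d₂' := min_le_right _ _
        _ ≤ hammingNorm a + hammingNorm b := by omega
    · by_cases hab0 : (fun i => a i + b i) = 0
      · -- a = -b, so hammingNorm a = hammingNorm b ≥ d₄'
        have ha_eq : a = -b := by
          funext i
          have := congrFun hab0 i
          simp only [Pi.zero_apply] at this
          simp [eq_neg_of_add_eq_zero_left this]
        have h4 : d₄' ≤ hammingNorm b := hd₄ ▸ minDist_le (dualCode C₄) hb hb0
        have : hammingNorm a = hammingNorm b := by rw [ha_eq, hammingNorm_neg]
        calc min (2 * d₄') d₂' ≤ 2 * d₄' := min_le_left _ _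
          _ ≤ hammingNorm a + hammingNorm b := by omega
      · have h2 : d₂' ≤ hammingNorm (fun i => a i + b i) :=
          hd₂ ▸ minDist_le (dualCode C₂) hab hab0
        have htri : hammingNorm (fun i => a i + b i) ≤ hammingNorm a + hammingNorm b := by
          have := hammingNorm_add_le a b
          simpa [Pi.add_def] using this
        calc min (2 * d₄') d₂' ≤ d₂' := min_le_right _ _
          _ ≤ hammingNorm a + hammingNorm b := by omega
end
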